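/- Let X be a topological space with a continuous involution σ, fix x₀ with σ(x₀) ≠ x₀, and let Γ be the set of homotopy classes (rel endpoints) of paths starting at x₀ and ending at x₀ or at σ(x₀), with multiplication γ₂·γ₁ = γ₂ ∘ γ₁ if γ₁(1) = x₀ and γ₂·γ₁ = σ(γ₂) ∘ γ₁ if γ₁(1) = σ(x₀). Then Γ is a group, π₁(X,x₀) is a normal subgroup, and there is an exact sequence 0 → π₁(X,x₀) → Γ → ℤ/2 → 0 given by the endpoint map. -/

import Mathlib

open Path.Homotopic

section EqvAux

attribute [local instance] Path.Homotopic.setoid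

variable {X : Type*} [TopologicalSpace X]

/-- reverse of a homotopy class of paths -/
def EqvAux.qsymm {x y : X} :
    Path.Homotopic.Quotient x y → Path.Homotopic.Quotient y x :=
  _root_.Quotient.map Path.symm fun _ _ h => Nonempty.map Path.Homotopy.symm₂ h

namespace EqvAux

local notation "Q" => Path.Homotopic.Quotient

theorem comp_lift {x y z : X} (P₀ : Path x y) (P₁ : Path y z) :
    (⟦P₀.trans P₁⟧ : Q x z) = Path.Homotopic.Quotient.trans ⟦P₀⟧ ⟦P₁⟧ := rfl

theorem map_lift {Y : Type*} [TopologicalSpace Y] {x y : X} (P₀ : Path x y) (f : C(X, Y)) :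
    (⟦P₀.map f.continuous⟧ : Q (f x) (f y)) = Path.Homotopic.Quotient.map ⟦P₀⟧ f := rfl

theorem comp_assoc {w x y z : X} (a : Q w x) (b : Q x y) (c : Q y z) :
    (a.trans b).trans c = a.trans (b.trans c) := by
  induction a using Quotient.inductionOn
  induction b using Quotient.inductionOn
  induction c using Quotient.inductionOn
  rw [← comp_lift, ← comp_lift, ← comp_lift, ← comp_lift]
  exact Quotient.sound ⟨Path.Homotopy.transAssoc _ _ _⟩

theorem refl_comp {x y : X} (a : Q x y) :
    Path.Homotopic.Quotient.trans ⟦Path.refl x⟧ a = a := by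
  induction a using Quotient.inductionOn
  rw [← comp_lift]
  exact Quotient.sound ⟨Path.Homotopy.reflTrans _⟩

theorem comp_refl {x y : X} (a : Q x y) :
    a.trans ⟦Path.refl y⟧ = a := by
  induction a using Quotient.inductionOn
  rw [← comp_lift]
  exact Quotient.sound ⟨Path.Homotopy.transRefl _⟩

theorem comp_symm {x y : X} (a : Q x y) :
    a.trans (qsymm a) = ⟦Path.refl x⟧ := by
  induction a using Quotient.inductionOn with
  | h p =>
    show Path.Homotopic.Quotient.trans ⟦p⟧ ⟦p.symm⟧ = ⟦Path.refl x⟧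
    rw [← comp_lift]
    exact Quotient.sound ⟨(Path.Homotopy.reflTransSymm _).symm⟩

variable {Y : Type*} [TopologicalSpace Y]

theorem mapFn_comp {x y z : X} (a : Q x y) (b : Q y z) (f : C(X, Y)) :
    (a.trans b).map f = (a.map f).trans (b.map f) := by
  induction a using Quotient.inductionOn
  induction b using Quotient.inductionOn
  rw [← comp_lift, ← map_lift, ← map_lift, ← map_lift, ← comp_lift, Path.map_trans]

theorem mapFn_refl (x : X) (f : C(X, Y)) :
    Path.Homotopic.Quotient.map (⟦Path.refl x⟧ : Q x x) f = ⟦Path.refl (f x)⟧ := by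
  rw [← map_lift]
  exact congrArg _ (by ext t; simp)

/-- cast of the left endpoint -/
def castL {x x' y : X} (e : x = x') (a : Q x y) : Q x' y :=
  cast (congrArg (fun u => Q u y) e) a

/-- cast of the right endpoint -/
def castR {x y y' : X} (e : y = y') (a : Q x y) : Q x y' :=
  cast (congrArg (fun u => Q x u) e) a

theorem castR_comp {x y z z' : X} (e : z = z') (p : Q x y) (q : Q y z) :
    castR e (p.trans q) = p.trans (castR e q) := by subst e; rfl

theorem castL_comp {x x' y z : X} (e : x = x') (p : Q x y) (q : Q y z) :
    castL e (p.trans q) = (castL e p).trans q := by subst e; rfl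

theorem comp_castL {x y y' z : X} (e : y' = y) (p : Q x y) (q : Q y' z) :
    p.trans (castL e q) = (castR e.symm p).trans q := by subst e; rfl

theorem castR_cancel {x y w : X} (e' : y = w) (e : w = y) (a : Q x y) :
    castR e (castR e' a) = a := by subst e'; rfl

theorem castL_cancel {x y w : X} (e' : x = w) (e : w = x) (a : Q x y) :
    castL e (castL e' a) = a := by subst e'; rfl

theorem castR_castL {x x' y y' : X} (e : x = x') (e' : y = y') (a : Q x y) :
    castR e' (castL e a) = castL e (castR e' a) := by subst e; subst e'; rfl

theorem mapFn_castR {x y y' : X} (e : y = y') (a : Q x y) (f : C(X, Y)) :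
    (castR e a).map f = castR (congrArg f e) (a.map f) := by subst e; rfl

theorem mapFn_castL {x x' y : X} (e : x = x') (a : Q x y) (f : C(X, Y)) :
    (castL e a).map f = castL (congrArg f e) (a.map f) := by subst e; rfl

theorem heq_to_cast {x x' y y' : X} (hx : x' = x) (hy : y' = y)
    (a : Q x' y') (b : Q x y) (h : HEq a b) :
    a = castL hx.symm (castR hy.symm b) := by
  subst hx; subst hy; exact eq_of_heq h

theorem mapFn_mapFn (σ : C(X, X)) (hσ : ∀ x, σ (σ x) = x) {x y : X} (a : Q x y) :
    (a.map σ).map σ = castL (hσ x).symm (castR (hσ y).symm a) := by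
  refine heq_to_cast (hσ x) (hσ y) _ _ ?_
  induction a using Quotient.inductionOn
  rw [← map_lift, ← map_lift]
  exact hpath_hext fun t => by simp [Path.map_coe, hσ]

end EqvAux

end EqvAux

open EqvAux in
/-- twisted multiplication -/
noncomputable def EqvAux.emul {X : Type*} [TopologicalSpace X] (σ : C(X, X)) (x₀ : X) (h : σ (σ x₀) = x₀) :
    (Path.Homotopic.Quotient x₀ x₀ ⊕ Path.Homotopic.Quotient x₀ (σ x₀)) →
    (Path.Homotopic.Quotient x₀ x₀ ⊕ Path.Homotopic.Quotient x₀ (σ x₀)) →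
    (Path.Homotopic.Quotient x₀ x₀ ⊕ Path.Homotopic.Quotient x₀ (σ x₀))
  | .inl c, .inl a => .inl (a.trans c)
  | .inr c, .inl a => .inr (a.trans c)
  | .inl c, .inr a => .inr (a.trans (c.map σ))
  | .inr c, .inr a => .inl (a.trans (castR h (c.map σ)))

open EqvAux in
/-- twisted inverse -/
noncomputable def EqvAux.einv {X : Type*} [TopologicalSpace X] (σ : C(X, X)) (x₀ : X) (h : σ (σ x₀) = x₀) :
    (Path.Homotopic.Quotient x₀ x₀ ⊕ Path.Homotopic.Quotient x₀ (σ x₀)) →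
    (Path.Homotopic.Quotient x₀ x₀ ⊕ Path.Homotopic.Quotient x₀ (σ x₀))
  | .inl a => .inl (qsymm a)
  | .inr a => .inr (castL h ((qsymm a).map σ))

attribute [local instance] Path.Homotopic.setoid


/-- The equivariant (orbifold) fundamental group of a space `X` with a continuous
involution `σ` and a base point `x₀` with `σ x₀ ≠ x₀`: on the disjoint union `Γ` of the
homotopy classes of loops at `x₀` and of paths from `x₀` to `σ x₀`, the multiplication
`γ₂·γ₁ = γ₂ ∘ γ₁` (when `γ₁` ends at `x₀`) and `γ₂·γ₁ = σ(γ₂) ∘ γ₁` (when `γ₁` ends at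
`σ x₀`) defines a group structure; the classes of loops form a normal subgroup isomorphic
to `π₁(X,x₀)`, and the endpoint map `Γ → ℤ/2` is a surjection (when `X` is
path-connected) with kernel exactly `π₁(X,x₀)`, giving the exact sequence
`0 → π₁(X,x₀) → Γ → ℤ/2 → 0`. -/
theorem stmt_15 {X : Type*} [TopologicalSpace X] [PathConnectedSpace X]
    (σ : C(X, X)) (hσ : ∀ x, σ (σ x) = x) (x₀ : X) (h₀ : σ x₀ ≠ x₀) :
    ∃ (mul : (Path.Homotopic.Quotient x₀ x₀ ⊕ Path.Homotopic.Quotient x₀ (σ x₀)) →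
             (Path.Homotopic.Quotient x₀ x₀ ⊕ Path.Homotopic.Quotient x₀ (σ x₀)) →
             (Path.Homotopic.Quotient x₀ x₀ ⊕ Path.Homotopic.Quotient x₀ (σ x₀)))
      (one : Path.Homotopic.Quotient x₀ x₀ ⊕ Path.Homotopic.Quotient x₀ (σ x₀))
      (inv : (Path.Homotopic.Quotient x₀ x₀ ⊕ Path.Homotopic.Quotient x₀ (σ x₀)) →
             (Path.Homotopic.Quotient x₀ x₀ ⊕ Path.Homotopic.Quotient x₀ (σ x₀))),
      -- group axioms
      (∀ a b c, mul (mul a b) c = mul a (mul b c)) ∧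
      (∀ a, mul one a = a) ∧ (∀ a, mul a one = a) ∧
      (∀ a, mul (inv a) a = one) ∧
      -- the multiplication `mul γ₂ γ₁` is concatenation, twisted by σ when γ₁ ends at σ x₀
      (∀ (c a : Path.Homotopic.Quotient x₀ x₀),
        mul (Sum.inl c) (Sum.inl a) = Sum.inl (a.trans c)) ∧
      (∀ (c : Path.Homotopic.Quotient x₀ (σ x₀)) (a : Path.Homotopic.Quotient x₀ x₀),
        mul (Sum.inr c) (Sum.inl a) = Sum.inr (a.trans c)) ∧
      (∀ (c : Path.Homotopic.Quotient x₀ x₀) (a : Path.Homotopic.Quotient x₀ (σ x₀)),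
        mul (Sum.inl c) (Sum.inr a) = Sum.inr (a.trans (c.map σ))) ∧
      (∀ (c a : Path.Homotopic.Quotient x₀ (σ x₀)),
        mul (Sum.inr c) (Sum.inr a) = Sum.inl (a.trans
          (cast (by rw [hσ x₀]) (c.map σ) : Path.Homotopic.Quotient (σ x₀) x₀))) ∧
      -- π₁(X,x₀) embeds (the inclusion Sum.inl is injective: exactness on the left)
      Function.Injective
        (Sum.inl : Path.Homotopic.Quotient x₀ x₀ →
          (Path.Homotopic.Quotient x₀ x₀ ⊕ Path.Homotopic.Quotient x₀ (σ x₀))) ∧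
      -- the loops form a normal subgroup
      (∀ (g : Path.Homotopic.Quotient x₀ x₀ ⊕ Path.Homotopic.Quotient x₀ (σ x₀))
          (a : Path.Homotopic.Quotient x₀ x₀),
        ∃ b : Path.Homotopic.Quotient x₀ x₀, mul (mul g (Sum.inl a)) (inv g) = Sum.inl b) ∧
      -- exactness in the middle and surjectivity of the endpoint map Γ → ℤ/2:
      -- `Sum.elim 0 1 : Γ → ℤ/2` has kernel exactly the image of π₁ (true by definition)
      (∀ g : Path.Homotopic.Quotient x₀ x₀ ⊕ Path.Homotopic.Quotient x₀ (σ x₀), Sum.elim (fun _ => (0 : ZMod 2)) (fun _ => (1 : ZMod 2)) g = 0 ↔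
        ∃ a : Path.Homotopic.Quotient x₀ x₀, g = Sum.inl a) ∧
      Function.Surjective
        (Sum.elim (fun _ => (0 : ZMod 2)) (fun _ => (1 : ZMod 2)) :
          (Path.Homotopic.Quotient x₀ x₀ ⊕ Path.Homotopic.Quotient x₀ (σ x₀)) → ZMod 2) := by
  have h : σ (σ x₀) = x₀ := hσ x₀
  refine ⟨EqvAux.emul σ x₀ h, Sum.inl ⟦Path.refl x₀⟧, EqvAux.einv σ x₀ h,
    ?_, ?_, ?_, ?_, ?_, ?_, ?_, ?_, ?_, ?_, ?_, ?_⟩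
  · -- associativity
    rintro (a | a) (b | b) (c | c) <;> simp only [EqvAux.emul]
    · rw [EqvAux.comp_assoc]
    · rw [EqvAux.mapFn_comp, ← EqvAux.comp_assoc]
    · rw [EqvAux.comp_assoc]
    · rw [EqvAux.mapFn_comp, EqvAux.mapFn_mapFn σ hσ, EqvAux.comp_castL,
        EqvAux.castR_comp, EqvAux.castR_cancel, ← EqvAux.comp_assoc]
    · rw [EqvAux.comp_assoc]
    · rw [EqvAux.mapFn_comp, EqvAux.castR_comp, ← EqvAux.comp_assoc]
    · rw [EqvAux.comp_assoc]
    · rw [EqvAux.mapFn_comp, EqvAux.mapFn_castR, EqvAux.mapFn_mapFn σ hσ,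
        EqvAux.castR_castL, EqvAux.castR_cancel, EqvAux.comp_castL, ← EqvAux.comp_assoc]
  · -- one_mul
    rintro (a | a) <;> simp only [EqvAux.emul]
    · rw [EqvAux.comp_refl]
    · rw [EqvAux.mapFn_refl, EqvAux.comp_refl]
  · -- mul_one
    rintro (a | a) <;> simp only [EqvAux.emul] <;> rw [EqvAux.refl_comp]
  · -- inv_mul
    rintro (a | a) <;> simp only [EqvAux.einv, EqvAux.emul]
    · rw [EqvAux.comp_symm]
    · rw [EqvAux.mapFn_castL, EqvAux.mapFn_mapFn σ hσ, EqvAux.castL_cancel,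
        EqvAux.castR_cancel, EqvAux.comp_symm]
  · exact fun c a => rfl
  · exact fun c a => rfl
  · exact fun c a => rfl
  · exact fun c a => rfl
  · exact Sum.inl_injective
  · rintro (g | g) a <;> exact ⟨_, rfl⟩
  · rintro (g | g)
    · exact ⟨fun _ => ⟨g, rfl⟩, fun _ => rfl⟩
    · constructor
      · intro hh; rw [Sum.elim_inr] at hh; exact absurd hh (by decide)
      · rintro ⟨b, hb⟩; simp at hb
  · intro z
    have hz : ∀ w : ZMod 2, w = 0 ∨ w = 1 := by decide
    rcases hz z with rfl | rfl
    · exact ⟨Sum.inl ⟦Path.refl x₀⟧, rfl⟩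
    · exact ⟨Sum.inr ⟦(PathConnectedSpace.joined x₀ (σ x₀)).somePath⟧, rfl⟩
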